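/- Let L > 0 and let (τ_k)_{k≥1} be a sequence of real numbers with τ_k ≥ 1/L for all k ≥ 1. Let (η_k)_{k≥0} be a sequence of positive reals satisfying, for every k ≥ 1: η_k = (1 + 1/τ_k)η_{k−1} if τ_k ≥ η_{k−1}; η_k = τ_k if η_{k−1}/2 < τ_k < η_{k−1}; and η_k = η_{k−1}/√2 if τ_k ≤ η_{k−1}/2. If η_i ≥ 1/(√2 L) for some index i ≥ 0, then η_k ≥ 1/(2L) for every k ≥ i. -/
import Mathlib


/-- Step 2 of the proof of Lemma 3.18: persistence of the adaptive step-size lower bound.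
If the step size reaches level `1/(√2 L)` at some index `i`, then all subsequent step
sizes stay above `1/(2L)`, provided the BB quantities satisfy `τ_k ≥ 1/L`. -/
theorem stepsize_persistence
    (L : ℝ) (hL : 0 < L) (τ η : ℕ → ℝ)
    (hτ : ∀ k, 1 ≤ k → 1 / L ≤ τ k)
    (hη_pos : ∀ k, 0 < η k)
    (hrec1 : ∀ k, 1 ≤ k → η (k - 1) ≤ τ k → η k = (1 + 1 / τ k) * η (k - 1))
    (hrec2 : ∀ k, 1 ≤ k → η (k - 1) / 2 < τ k → τ k < η (k - 1) → η k = τ k)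
    (hrec3 : ∀ k, 1 ≤ k → τ k ≤ η (k - 1) / 2 → η k = η (k - 1) / Real.sqrt 2)
    (i : ℕ) (hi : 1 / (Real.sqrt 2 * L) ≤ η i) :
    ∀ k, i ≤ k → 1 / (2 * L) ≤ η k := by
  have hs2pos : (0:ℝ) < Real.sqrt 2 := Real.sqrt_pos.mpr (by norm_num)
  have hs2sq : Real.sqrt 2 ^ 2 = 2 := Real.sq_sqrt (by norm_num)
  have hs2one : (1:ℝ) ≤ Real.sqrt 2 := by nlinarith
  have hs2two : Real.sqrt 2 ≤ 2 := by nlinarith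
  have key : ∀ k, i ≤ k → 1 / (Real.sqrt 2 * L) ≤ η k := by
    intro k hk
    induction k, hk using Nat.le_induction with
    | base => exact hi
    | succ n hn ih =>
      have h1 : 1 ≤ n + 1 := by omega
      have hτn : 1 / L ≤ τ (n + 1) := hτ _ h1
      have hτpos : 0 < τ (n + 1) := lt_of_lt_of_le (by positivity) hτn
      have hpred : (n + 1) - 1 = n := rfl
      rcases le_or_gt (η n) (τ (n + 1)) with h | h
      · have hr := hrec1 (n + 1) h1 (by rw [hpred]; exact h)
        rw [hr, hpred]
        have hgrow : η n ≤ (1 + 1 / τ (n + 1)) * η n := by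
          have h0 : 0 < 1 / τ (n + 1) := by positivity
          nlinarith [hη_pos n]
        linarith [ih]
      · rcases le_or_gt (τ (n + 1)) (η n / 2) with h2 | h2
        · have hr := hrec3 (n + 1) h1 (by rw [hpred]; exact h2)
          rw [hr, hpred]
          have hηn : 2 / L ≤ η n := by
            have h3 := le_trans hτn h2
            have h4 : (2:ℝ)/L = 2*(1/L) := by ring
            linarith
          rw [div_le_div_iff₀ (by positivity) hs2pos]
          have h2L : (2 : ℝ) ≤ L * η n := by
            rw [div_le_iff₀ hL] at hηn; linarith
          nlinarith
        · have hr := hrec2 (n + 1) h1 (by rw [hpred]; exact h2) (by rw [hpred]; exact h)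
          rw [hr]
          calc 1 / (Real.sqrt 2 * L) ≤ 1 / L := by
                apply one_div_le_one_div_of_le hL; nlinarith
            _ ≤ τ (n + 1) := hτn
  intro k hk
  calc 1 / (2 * L) ≤ 1 / (Real.sqrt 2 * L) := by
        apply one_div_le_one_div_of_le (by positivity); nlinarith
    _ ≤ η k := key k hk
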